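/- For every real z > 0 and every h ∈ (0,1): h·(1 - F_{z-1}(h)) / (c_z·(1-h²)^z) = z · ∫₀¹ (1-t)^{z-1} / √(1 + ((1-h²)/h²)·t) dt. -/

import Mathlib

open Real MeasureTheory Set

lemma beta_half (z : ℝ) (hz : 0 < z) :
    IntervalIntegrable (fun u : ℝ => u ^ (-(1/2) : ℝ) * (1 - u) ^ (z - 1)) volume 0 1 ∧
      ∫ u in (0:ℝ)..1, u ^ (-(1/2) : ℝ) * (1 - u) ^ (z - 1) =
        Real.sqrt π * Real.Gamma z / Real.Gamma (z + 1/2) := by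
  set G : ℝ → ℝ := fun u => u ^ (-(1/2) : ℝ) * (1 - u) ^ (z - 1) with hG
  have hre : (0:ℝ) < Complex.re (1/2) := by norm_num
  have hrez : 0 < Complex.re (z : ℂ) := by simpa using hz
  have hEq : Set.EqOn (fun x : ℝ => (x:ℂ) ^ ((1/2:ℂ) - 1) * ((1:ℂ) - x) ^ ((z:ℂ) - 1))
      (fun x : ℝ => ((G x : ℝ) : ℂ)) (Set.uIcc (0:ℝ) 1) := by
    intro x hx
    rw [Set.uIcc_of_le (by norm_num : (0:ℝ) ≤ 1)] at hx
    have e1 : (x:ℂ) ^ ((1/2:ℂ) - 1) = ((x ^ (-(1/2):ℝ) : ℝ) : ℂ) := by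
      rw [show ((1/2:ℂ) - 1) = ((-(1/2):ℝ) : ℂ) by norm_num, ← Complex.ofReal_cpow hx.1]
    have e2 : ((1:ℂ) - x) ^ ((z:ℂ) - 1) = (((1 - x) ^ (z - 1) : ℝ) : ℂ) := by
      rw [show ((1:ℂ) - x) = ((1 - x : ℝ) : ℂ) by push_cast; ring,
        show ((z:ℂ) - 1) = ((z - 1 : ℝ) : ℂ) by push_cast; ring,
        ← Complex.ofReal_cpow (by linarith [hx.2])]
    simp only [hG, e1, e2, Complex.ofReal_mul]
  have hBconv := Complex.betaIntegral_convergent (u := 1/2) (v := z) hre hrez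
  have hIntC : IntervalIntegrable (fun x : ℝ => ((G x : ℝ) : ℂ)) volume 0 1 := by
    rw [intervalIntegrable_iff_integrableOn_Ioc_of_le (by norm_num : (0:ℝ) ≤ 1)] at hBconv ⊢
    have hEq' : Set.EqOn (fun x : ℝ => (x:ℂ) ^ ((1/2:ℂ) - 1) * ((1:ℂ) - x) ^ ((z:ℂ) - 1))
        (fun x : ℝ => ((G x : ℝ) : ℂ)) (Set.Ioc (0:ℝ) 1) := by
      intro x hx
      refine hEq ?_
      rw [Set.uIcc_of_le (by norm_num : (0:ℝ) ≤ 1)]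
      exact Set.Ioc_subset_Icc_self hx
    exact MeasureTheory.IntegrableOn.congr_fun hBconv hEq' measurableSet_Ioc
  have hIntR : IntervalIntegrable G volume 0 1 := by
    rw [intervalIntegrable_iff_integrableOn_Ioc_of_le (by norm_num : (0:ℝ) ≤ 1)] at hIntC ⊢
    have := Complex.reCLM.integrable_comp hIntC
    have h2 : Integrable (fun a => G a) (volume.restrict (Ioc 0 1)) := by simpa using this
    exact h2
  refine ⟨hIntR, ?_⟩
  have hBeta := Complex.Gamma_mul_Gamma_eq_betaIntegral hre hrez
  have hBval : Complex.betaIntegral (1/2) z = ((∫ u in (0:ℝ)..1, G u : ℝ) : ℂ) := by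
    rw [Complex.betaIntegral, intervalIntegral.integral_congr hEq,
      intervalIntegral.integral_ofReal]
  have hG2 : Complex.Gamma (1/2) = ((Real.sqrt π : ℝ) : ℂ) := by
    rw [show (1/2:ℂ) = ((1/2:ℝ):ℂ) by norm_num, Complex.Gamma_ofReal,
      Real.Gamma_one_half_eq]
  have hGz : Complex.Gamma (z : ℂ) = ((Real.Gamma z : ℝ) : ℂ) := Complex.Gamma_ofReal z
  have hGzh : Complex.Gamma (1/2 + (z:ℂ)) = ((Real.Gamma (z + 1/2) : ℝ) : ℂ) := by
    rw [show ((1/2:ℂ) + (z:ℂ)) = ((z + 1/2 : ℝ):ℂ) by push_cast; ring, Complex.Gamma_ofReal]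
  rw [hBval, hG2, hGz, hGzh] at hBeta
  have hReal : Real.sqrt π * Real.Gamma z = Real.Gamma (z + 1/2) * ∫ u in (0:ℝ)..1, G u := by
    exact_mod_cast hBeta
  have hΓpos : 0 < Real.Gamma (z + 1/2) := Real.Gamma_pos_of_pos (by linarith)
  rw [eq_div_iff hΓpos.ne']
  linear_combination -hReal

set_option maxHeartbeats 2000000 in
theorem F_ratio_integral_repr (z h : ℝ) (hz : 0 < z) (hh : h ∈ Set.Ioo (0:ℝ) 1)
    (c : ℝ) (hc : c = Real.Gamma (z + 1/2) / (2 * Real.sqrt π * Real.Gamma (z + 1)))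
    (F : ℝ → ℝ) (hF : ∀ t ∈ Set.Icc (-1:ℝ) 1,
      F t = 2 * z * c * ∫ s in (-1:ℝ)..t, (1 - s^2) ^ (z - 1)) :
    h * (1 - F h) / (c * (1 - h^2) ^ z) =
      z * ∫ t in (0:ℝ)..1, (1 - t) ^ (z - 1) / Real.sqrt (1 + ((1 - h^2) / h^2) * t) := by
  obtain ⟨h0, h1⟩ := hh
  have hh2 : 0 < 1 - h ^ 2 := by nlinarith
  have hπ : 0 < Real.sqrt π := Real.sqrt_pos.mpr Real.pi_pos
  have hΓ1 : 0 < Real.Gamma (z + 1/2) := Real.Gamma_pos_of_pos (by linarith)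
  have hΓ2 : 0 < Real.Gamma (z + 1) := Real.Gamma_pos_of_pos (by linarith)
  have hΓz : 0 < Real.Gamma z := Real.Gamma_pos_of_pos hz
  have hcpos : 0 < c := by rw [hc]; positivity
  set g : ℝ → ℝ := fun s => (1 - s ^ 2) ^ (z - 1) with hgdef
  obtain ⟨hKint, hKval⟩ := beta_half z hz
  set G : ℝ → ℝ := fun u => u ^ (-(1/2) : ℝ) * (1 - u) ^ (z - 1) with hGdef
  set K : ℝ := ∫ u in (0:ℝ)..1, G u with hKdef
  clear_value G K
  -- sqrt change of variables on (0,1)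
  have hsqrt_img : Real.sqrt '' Set.Ioo 0 1 = Set.Ioo (0:ℝ) 1 := by
    ext y; constructor
    · rintro ⟨x, hx, rfl⟩
      refine ⟨Real.sqrt_pos.mpr hx.1, ?_⟩
      calc Real.sqrt x < Real.sqrt 1 := Real.sqrt_lt_sqrt hx.1.le hx.2
        _ = 1 := Real.sqrt_one
    · intro hy
      exact ⟨y ^ 2, ⟨pow_pos hy.1 2, by nlinarith [hy.1, hy.2]⟩, Real.sqrt_sq hy.1.le⟩
  have hsqrt_inj : Set.InjOn Real.sqrt (Set.Ioo 0 1) := fun a ha b hb hab => by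
    have h2 := congrArg (fun t => t ^ 2) hab
    simpa [Real.sq_sqrt ha.1.le, Real.sq_sqrt hb.1.le] using h2
  have hsqrt_deriv : ∀ x ∈ Set.Ioo (0:ℝ) 1,
      HasDerivWithinAt Real.sqrt (1 / (2 * Real.sqrt x)) (Set.Ioo 0 1) x :=
    fun x hx => (Real.hasDerivAt_sqrt hx.1.ne').hasDerivWithinAt
  have cov2 := integral_image_eq_integral_abs_deriv_smul measurableSet_Ioo hsqrt_deriv hsqrt_inj g
  have iff2 := integrableOn_image_iff_integrableOn_abs_deriv_smul measurableSet_Ioo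
    hsqrt_deriv hsqrt_inj g
  rw [hsqrt_img] at cov2 iff2
  have integrand2 : Set.EqOn (fun x => |1 / (2 * Real.sqrt x)| • g (Real.sqrt x))
      (fun x => (1/2) * G x) (Set.Ioo (0:ℝ) 1) := by
    intro x hx
    have hx0 : 0 < x := hx.1
    have hs0 : 0 < Real.sqrt x := Real.sqrt_pos.mpr hx0
    have habs : |1 / (2 * Real.sqrt x)| = 1 / (2 * Real.sqrt x) := abs_of_pos (by positivity)
    have hxr : x ^ (-(1/2) : ℝ) = (Real.sqrt x)⁻¹ := by
      rw [Real.rpow_neg hx0.le, Real.sqrt_eq_rpow]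
    simp only [smul_eq_mul, habs, hgdef, Real.sq_sqrt hx0.le, hGdef, hxr]
    field_simp
  have hGIoo : IntegrableOn G (Set.Ioo 0 1) := by
    have h' := (intervalIntegrable_iff_integrableOn_Ioc_of_le (by norm_num : (0:ℝ) ≤ 1)).mp hKint
    exact h'.congr_set_ae Ioo_ae_eq_Ioc
  have hgIoo01 : IntegrableOn g (Set.Ioo 0 1) := by
    rw [iff2]
    exact MeasureTheory.IntegrableOn.congr_fun (hGIoo.const_mul (1/2)) integrand2.symm
      measurableSet_Ioo
  have hI01 : ∫ x in Set.Ioo (0:ℝ) 1, g x = (1/2) * K := by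
    rw [cov2, setIntegral_congr_fun measurableSet_Ioo integrand2, integral_const_mul]
    congr 1
    rw [hKdef, intervalIntegral.integral_of_le (by norm_num : (0:ℝ) ≤ 1),
      integral_Ioc_eq_integral_Ioo]
  -- reflection
  have hneg_img : (fun x : ℝ => -x) '' Set.Ioo 0 1 = Set.Ioo (-1:ℝ) 0 := by
    ext y
    simp only [Set.mem_image, Set.mem_Ioo]
    constructor
    · rintro ⟨x, ⟨hx1, hx2⟩, rfl⟩
      exact ⟨by linarith, by linarith⟩
    · rintro ⟨hy1, hy2⟩
      exact ⟨-y, ⟨by linarith, by linarith⟩, by ring⟩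
  have hneg_deriv : ∀ x ∈ Set.Ioo (0:ℝ) 1,
      HasDerivWithinAt (fun x : ℝ => -x) (-1) (Set.Ioo 0 1) x :=
    fun x _ => (hasDerivAt_neg x).hasDerivWithinAt
  have hneg_inj : Set.InjOn (fun x : ℝ => -x) (Set.Ioo 0 1) :=
    fun a _ b _ hab => neg_injective hab
  have covneg := integral_image_eq_integral_abs_deriv_smul measurableSet_Ioo
    hneg_deriv hneg_inj g
  have iffneg := integrableOn_image_iff_integrableOn_abs_deriv_smul measurableSet_Ioo
    hneg_deriv hneg_inj g
  rw [hneg_img] at covneg iffneg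
  have integrandneg : Set.EqOn (fun x : ℝ => |(-1:ℝ)| • g (-x)) g (Set.Ioo (0:ℝ) 1) := by
    intro x _
    simp [hgdef]
  have hgIooNeg : IntegrableOn g (Set.Ioo (-1:ℝ) 0) := by
    rw [iffneg]
    exact MeasureTheory.IntegrableOn.congr_fun hgIoo01 integrandneg.symm measurableSet_Ioo
  have hIneg : ∫ x in Set.Ioo (-1:ℝ) 0, g x = (1/2) * K := by
    rw [covneg, setIntegral_congr_fun measurableSet_Ioo integrandneg, hI01]
  -- interval integrability on [-1,1]
  have hgIoc : IntegrableOn g (Set.Ioc (-1:ℝ) 1) := by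
    have hA : IntegrableOn g (Set.Ioc (-1:ℝ) 0) := hgIooNeg.congr_set_ae Ioo_ae_eq_Ioc.symm
    have hB : IntegrableOn g (Set.Ioc (0:ℝ) 1) := hgIoo01.congr_set_ae Ioo_ae_eq_Ioc.symm
    have := hA.union hB
    rwa [Set.Ioc_union_Ioc_eq_Ioc (by norm_num : (-1:ℝ) ≤ 0) (by norm_num : (0:ℝ) ≤ 1)] at this
  have hgII : IntervalIntegrable g volume (-1) 1 :=
    (intervalIntegrable_iff_integrableOn_Ioc_of_le (by norm_num : (-1:ℝ) ≤ 1)).mpr hgIoc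
  have hmem : ∀ x : ℝ, -1 ≤ x → x ≤ 1 → x ∈ Set.uIcc (-1:ℝ) 1 := by
    intro x hx1 hx2
    rw [Set.uIcc_of_le (by norm_num : (-1:ℝ) ≤ 1)]
    exact ⟨hx1, hx2⟩
  have hgIIa : IntervalIntegrable g volume (-1) h :=
    hgII.mono_set (Set.uIcc_subset_uIcc (hmem _ le_rfl (by norm_num))
      (hmem _ (by linarith) h1.le))
  have hgIIb : IntervalIntegrable g volume h 1 :=
    hgII.mono_set (Set.uIcc_subset_uIcc (hmem _ (by linarith) h1.le)
      (hmem _ (by norm_num) le_rfl))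
  have hgIIc : IntervalIntegrable g volume (-1) 0 :=
    hgII.mono_set (Set.uIcc_subset_uIcc (hmem _ le_rfl (by norm_num))
      (hmem _ (by norm_num) (by norm_num)))
  have hgIId : IntervalIntegrable g volume 0 1 :=
    hgII.mono_set (Set.uIcc_subset_uIcc (hmem _ (by norm_num) (by norm_num))
      (hmem _ (by norm_num) le_rfl))
  -- total integral
  have e01 : (∫ s in (0:ℝ)..1, g s) = (1/2) * K := by
    rw [intervalIntegral.integral_of_le (by norm_num : (0:ℝ) ≤ 1),
      integral_Ioc_eq_integral_Ioo, hI01]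
  have eneg : (∫ s in (-1:ℝ)..0, g s) = (1/2) * K := by
    rw [intervalIntegral.integral_of_le (by norm_num : (-1:ℝ) ≤ 0),
      integral_Ioc_eq_integral_Ioo, hIneg]
  have htot : (∫ s in (-1:ℝ)..1, g s) = K := by
    rw [← intervalIntegral.integral_add_adjacent_intervals hgIIc hgIId, e01, eneg]; ring
  have hsplith : (∫ s in (-1:ℝ)..h, g s) + (∫ s in h..1, g s) = K := by
    rw [intervalIntegral.integral_add_adjacent_intervals hgIIa hgIIb, htot]
  -- change of variables for the main integral
  set a : ℝ := (1 - h^2)/h^2 with hadef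
  have hapos : 0 < a := div_pos hh2 (by positivity)
  clear_value a
  set f : ℝ → ℝ := fun t => Real.sqrt (h^2 + (1-h^2)*t) with hfdef
  set f' : ℝ → ℝ := fun t => 1/(2*Real.sqrt (h^2+(1-h^2)*t)) * (1-h^2) with hf'def
  have hupos : ∀ t ∈ Set.Ioo (0:ℝ) 1, 0 < h^2+(1-h^2)*t := by
    intro t ht; nlinarith [ht.1, ht.2]
  have hfderiv : ∀ t ∈ Set.Ioo (0:ℝ) 1, HasDerivWithinAt f (f' t) (Set.Ioo 0 1) t := by
    intro t ht
    have hin : HasDerivAt (fun t : ℝ => h^2+(1-h^2)*t) (1-h^2) t := by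
      simpa using ((hasDerivAt_id t).const_mul (1-h^2)).const_add (h^2)
    exact ((Real.hasDerivAt_sqrt (hupos t ht).ne').comp t hin).hasDerivWithinAt
  have hfimg : f '' Set.Ioo 0 1 = Set.Ioo h 1 := by
    ext y; constructor
    · rintro ⟨t, ht, rfl⟩
      have hu := hupos t ht
      constructor
      · have : Real.sqrt (h^2) < Real.sqrt (h^2+(1-h^2)*t) :=
          Real.sqrt_lt_sqrt (by positivity) (by nlinarith [ht.1])
        rwa [Real.sqrt_sq h0.le] at this
      · have : Real.sqrt (h^2+(1-h^2)*t) < Real.sqrt 1 :=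
          Real.sqrt_lt_sqrt hu.le (by nlinarith [ht.2])
        rwa [Real.sqrt_one] at this
    · intro hy
      refine ⟨(y^2-h^2)/(1-h^2), ⟨div_pos (by nlinarith [hy.1]) hh2, ?_⟩, ?_⟩
      · rw [div_lt_one hh2]; nlinarith [hy.1, hy.2, h0]
      · have hval : h^2 + (1-h^2)*((y^2-h^2)/(1-h^2)) = y^2 := by
          field_simp
          ring
        rw [hfdef]; simp only [hval]
        exact Real.sqrt_sq (by linarith [hy.1] : (0:ℝ) ≤ y)
  have hfinj : Set.InjOn f (Set.Ioo 0 1) := by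
    intro x hx y hy hxy
    have h2 := congrArg (fun t => t ^ 2) hxy
    simp only [hfdef, Real.sq_sqrt (hupos x hx).le, Real.sq_sqrt (hupos y hy).le] at h2
    have : (1-h^2)*x = (1-h^2)*y := by linarith
    exact mul_left_cancel₀ hh2.ne' this
  have cov1 := integral_image_eq_integral_abs_deriv_smul measurableSet_Ioo hfderiv hfinj g
  rw [hfimg] at cov1
  have integrand1 : Set.EqOn (fun t => |f' t| • g (f t))
      (fun t => ((1-h^2)^z/(2*h)) * ((1-t)^(z-1) / Real.sqrt (1 + a*t))) (Set.Ioo (0:ℝ) 1) := by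
    intro t ht
    have hu := hupos t ht
    have h1t : (0:ℝ) ≤ 1 - t := by linarith [ht.2]
    have hat : 0 < 1 + a*t := by nlinarith [ht.1, hapos]
    have hsat : 0 < Real.sqrt (1 + a*t) := Real.sqrt_pos.mpr hat
    have hz1 : (1-h^2)^(z-1)*(1-h^2) = (1-h^2)^z := by
      rw [← Real.rpow_add_one hh2.ne' (z-1)]; norm_num
    have ha2 : h^2 * a = 1-h^2 := by rw [hadef]; field_simp
    have husplit : h^2+(1-h^2)*t = h^2*(1+a*t) := by
      rw [mul_add, mul_one, ← mul_assoc, ha2]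
    have hsqu : Real.sqrt (h^2+(1-h^2)*t) = h * Real.sqrt (1+a*t) := by
      rw [husplit, Real.sqrt_mul (by positivity), Real.sqrt_sq h0.le]
    have hden : 0 < 2*(h*Real.sqrt (1+a*t)) := by nlinarith [mul_pos h0 hsat]
    have hpos : (0:ℝ) < 1/(2*(h*Real.sqrt (1+a*t)))*(1-h^2) :=
      mul_pos (div_pos one_pos hden) hh2
    simp only [hf'def, hgdef, hfdef, smul_eq_mul]
    rw [Real.sq_sqrt hu.le, hsqu,
      show (1:ℝ) - (h^2+(1-h^2)*t) = (1-h^2)*(1-t) by ring,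
      Real.mul_rpow hh2.le h1t, abs_of_pos hpos, ← hz1]
    field_simp
  have hstep1 : (∫ s in h..1, g s) =
      ((1-h^2)^z/(2*h)) * ∫ t in (0:ℝ)..1, (1-t)^(z-1)/Real.sqrt (1+a*t) := by
    rw [intervalIntegral.integral_of_le h1.le, integral_Ioc_eq_integral_Ioo, cov1,
      setIntegral_congr_fun measurableSet_Ioo integrand1, integral_const_mul,
      intervalIntegral.integral_of_le (by norm_num : (0:ℝ) ≤ 1), integral_Ioc_eq_integral_Ioo]
  -- value of F h
  have hFh : F h = 2*z*c*(K - ∫ s in h..1, g s) := by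
    rw [hF h ⟨by linarith, h1.le⟩]
    have heq : (∫ s in (-1:ℝ)..h, g s) = K - ∫ s in h..1, g s := by linarith [hsplith]
    rw [heq]
  have hKeq : K = Real.sqrt π * Real.Gamma z / Real.Gamma (z + 1/2) := hKval
  have hΓadd : Real.Gamma (z+1) = z * Real.Gamma z := Real.Gamma_add_one hz.ne'
  have h2zcK : 2*z*c*K = 1 := by
    rw [hKeq, hc, hΓadd]
    field_simp
  have hrz : 0 < (1-h^2)^z := Real.rpow_pos_of_pos hh2 z
  set R : ℝ := (1-h^2)^z with hRdef
  set J : ℝ := ∫ t in (0:ℝ)..1, (1-t)^(z-1)/Real.sqrt (1+a*t) with hJdef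
  clear_value R J
  rw [hFh, hstep1]
  have key : h * (1 - 2*z*c*(K - (R/(2*h))*J)) = z*c*R*J := by
    have e1 : h * (R/(2*h)) = R/2 := by
      field_simp
    calc h * (1 - 2*z*c*(K - (R/(2*h))*J))
        = h*(1-2*z*c*K) + 2*z*c*(h*(R/(2*h)))*J := by ring
      _ = z*c*R*J := by rw [h2zcK, e1]; ring
  rw [div_eq_iff (by positivity : c*R ≠ 0)]
  linear_combination key
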